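/- arXiv:1310.1239 — 7 statements merged into one kernel-verified Lean document; each statement's English description precedes it below -/
import Mathlib

section
/- For all nonnegative integers n, the Hermite and poly-Bernoulli mixed-type polynomial satisfies HB_n^{(ν,k)}(x) = \sum_{m=0}^{\lfloor n/2 \rfloor} \binom{n}{2m} \frac{(2m)!}{m!} (-ν/2)^m B_{n-2m}^{(k)}(x). -/
open PowerSeries Finset

/-- The power series e^{-t}. -/
noncomputable def expNeg : PowerSeries ℝ := rescale (-1) (PowerSeries.exp ℝ)

/-- Li_k(1-e^{-t})/(1-e^{-t}) = ∑_{m≥0} (1-e^{-t})^m/(m+1)^k as a formal power series. -/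
noncomputable def pbGF (k : ℤ) : PowerSeries ℝ :=
  PowerSeries.mk fun n => ∑ m ∈ Finset.range (n + 1),
    (1 / ((m : ℝ) + 1) ^ k) * PowerSeries.coeff n ((1 - expNeg) ^ m)

/-- The power series e^{-ν t²/2}. -/
noncomputable def hermGF (ν : ℝ) : PowerSeries ℝ :=
  PowerSeries.mk fun n =>
    if Even n then (-ν / 2) ^ (n / 2) / (Nat.factorial (n / 2)) else 0

/-- Hermite and poly-Bernoulli mixed-type polynomials. -/
noncomputable def HB (ν : ℝ) (k : ℤ) (n : ℕ) (x : ℝ) : ℝ :=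
  (Nat.factorial n) *
    PowerSeries.coeff n (hermGF ν * pbGF k * rescale x (PowerSeries.exp ℝ))

/-- Poly-Bernoulli polynomials. -/
noncomputable def pB (k : ℤ) (n : ℕ) (x : ℝ) : ℝ :=
  (Nat.factorial n) * PowerSeries.coeff n (pbGF k * rescale x (PowerSeries.exp ℝ))

/-- Hermite polynomials of order ν. -/
noncomputable def Herm (ν : ℝ) (n : ℕ) (x : ℝ) : ℝ :=
  (Nat.factorial n) * PowerSeries.coeff n (hermGF ν * rescale x (PowerSeries.exp ℝ))

/-- Stirling numbers of the second kind. -/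
def S2 : ℕ → ℕ → ℕ
  | 0, 0 => 1
  | 0, _ + 1 => 0
  | _ + 1, 0 => 0
  | n + 1, m + 1 => (m + 1) * S2 n (m + 1) + S2 n m


theorem HB_eq_sum_polyBernoulli (ν : ℝ) (hν : ν ≠ 0) (k : ℤ) (n : ℕ) (x : ℝ) :
    HB ν k n x = ∑ m ∈ Finset.range (n / 2 + 1),
      (n.choose (2 * m) : ℝ) * (Nat.factorial (2 * m)) / (Nat.factorial m) *
        (-ν / 2) ^ m * pB k (n - 2 * m) x := by
  unfold HB
  rw [mul_assoc (hermGF ν), PowerSeries.coeff_mul,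
    Finset.Nat.sum_antidiagonal_eq_sum_range_succ_mk, Finset.mul_sum]
  simp only [hermGF, PowerSeries.coeff_mk, ite_mul, zero_mul, mul_ite, mul_zero]
  rw [← Finset.sum_filter]
  rw [Finset.sum_nbij' (i := fun i => i / 2) (j := fun m => 2 * m)]
  · intro i hi
    simp only [Finset.mem_filter, Finset.mem_range] at hi
    simp only [Finset.mem_range]
    omega
  · intro m hm
    simp only [Finset.mem_range] at hm
    simp only [Finset.mem_filter, Finset.mem_range]
    exact ⟨by omega, even_two_mul m⟩
  · intro i hi
    simp only [Finset.mem_filter, Finset.mem_range] at hi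
    obtain ⟨r, hr⟩ := hi.2
    omega
  · intro m hm
    omega
  · intro m hm
    simp only [Finset.mem_filter, Finset.mem_range] at hm
    obtain ⟨hmn, r, hr⟩ := hm
    have h2 : 2 * (m / 2) = m := by omega
    have hle : 2 * (m / 2) ≤ n := by omega
    unfold pB
    have key : ((n.choose (2 * (m / 2)) : ℝ) * (Nat.factorial (2 * (m / 2))) *
        (Nat.factorial (n - 2 * (m / 2)))) = (Nat.factorial n : ℝ) := by
      exact_mod_cast congrArg (Nat.cast : ℕ → ℝ)
        (Nat.choose_mul_factorial_mul_factorial hle)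
    rw [h2]
    have hm0 : (Nat.factorial (m / 2) : ℝ) ≠ 0 := by positivity
    field_simp
    rw [h2] at key
    linear_combination (-(ν ^ (m / 2) * (PowerSeries.coeff (n - m))
      (pbGF k * (rescale x) (PowerSeries.exp ℝ))
      * (-1 / 2 : ℝ) ^ (m / 2))) * key
end

section
/- For all nonnegative integers n, HB_n^{(ν,k)}(x) = \sum_{m=0}^{n} \frac{1}{(m+1)^k} \sum_{j=0}^{m} \binom{m}{j} (-1)^j H_n^{(ν)}(x-j), where H_n^{(ν)} denotes the Hermite polynomials of order ν. -/
open PowerSeries Finset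

lemma coeff_zero_one_sub_expNeg : PowerSeries.coeff 0 (1 - expNeg) = 0 := by
  have h : PowerSeries.coeff 0 expNeg = 1 := by
    rw [expNeg, PowerSeries.coeff_rescale, PowerSeries.coeff_exp]
    norm_num
  rw [map_sub, h]
  simp

lemma coeff_one_sub_expNeg_pow {m p : ℕ} (hp : p < m) :
    PowerSeries.coeff p ((1 - expNeg) ^ m) = 0 := by
  induction m generalizing p with
  | zero => omega
  | succ m ih =>
    rw [pow_succ, PowerSeries.coeff_mul]
    apply Finset.sum_eq_zero
    rintro ⟨i, j⟩ hij
    rw [Finset.HasAntidiagonal.mem_antidiagonal] at hij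
    rcases Nat.eq_zero_or_pos j with hj | hj
    · subst hj
      rw [coeff_zero_one_sub_expNeg, mul_zero]
    · rw [ih (by omega), zero_mul]

lemma expNeg_pow_mul_rescale_exp (x : ℝ) (j : ℕ) :
    expNeg ^ j * rescale x (PowerSeries.exp ℝ) = rescale (x - j) (PowerSeries.exp ℝ) := by
  have h1 : expNeg ^ j = rescale (-(j : ℝ)) (PowerSeries.exp ℝ) := by
    rw [expNeg, ← map_pow, PowerSeries.exp_pow_eq_rescale_exp, PowerSeries.rescale_rescale]
    norm_num
  rw [h1, PowerSeries.exp_mul_exp_eq_exp_add]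
  ring_nf

theorem HB_eq_sum_hermite (ν : ℝ) (hν : ν ≠ 0) (k : ℤ) (n : ℕ) (x : ℝ) :
    HB ν k n x = ∑ m ∈ Finset.range (n + 1),
      (1 / ((m : ℝ) + 1) ^ k) * ∑ j ∈ Finset.range (m + 1),
        (m.choose j : ℝ) * (-1) ^ j * Herm ν n (x - j) := by
  set E := rescale x (PowerSeries.exp ℝ) with hE
  set B := hermGF ν * E with hB
  set Q : PowerSeries ℝ := ∑ m ∈ Finset.range (n + 1),
    PowerSeries.C (1 / ((m : ℝ) + 1) ^ k) * (1 - expNeg) ^ m with hQ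
  have hQcoeff : ∀ p ≤ n, PowerSeries.coeff p (pbGF k) = PowerSeries.coeff p Q := by
    intro p hp
    rw [pbGF, PowerSeries.coeff_mk, hQ, map_sum]
    simp_rw [PowerSeries.coeff_C_mul]
    apply Finset.sum_subset
    · intro m hm
      simp only [Finset.mem_range] at hm ⊢
      omega
    · intro m hm hm'
      simp only [Finset.mem_range] at hm hm'
      rw [coeff_one_sub_expNeg_pow (by omega), mul_zero]
  have step1 : HB ν k n x = (n.factorial : ℝ) * PowerSeries.coeff n (Q * B) := by
    rw [HB]
    have : hermGF ν * pbGF k * E = pbGF k * B := by rw [hB]; ring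
    rw [this, PowerSeries.coeff_mul, PowerSeries.coeff_mul]
    congr 1
    apply Finset.sum_congr rfl
    rintro ⟨i, j⟩ hij
    rw [Finset.HasAntidiagonal.mem_antidiagonal] at hij
    rw [hQcoeff i (by omega)]
  have step2 : ∀ m : ℕ, PowerSeries.coeff n ((1 - expNeg) ^ m * B) =
      ∑ j ∈ Finset.range (m + 1),
        (m.choose j : ℝ) * (-1) ^ j *
          PowerSeries.coeff n (hermGF ν * rescale (x - j) (PowerSeries.exp ℝ)) := by
    intro m
    have hbin : (1 - expNeg) ^ m = ∑ j ∈ Finset.range (m + 1),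
        (m.choose j : PowerSeries ℝ) * (-1) ^ j * expNeg ^ j := by
      have := add_pow (-expNeg) (1 : PowerSeries ℝ) m
      rw [neg_add_eq_sub] at this
      rw [this]
      apply Finset.sum_congr rfl
      intro j hj
      rw [neg_pow]
      ring
    rw [hbin, Finset.sum_mul, map_sum]
    apply Finset.sum_congr rfl
    intro j hj
    have hc : ((m.choose j : PowerSeries ℝ)) * (-1) ^ j =
        PowerSeries.C ((m.choose j : ℝ) * (-1) ^ j) := by
      rw [map_mul, map_pow, map_neg, map_one, map_natCast]
    have : (m.choose j : PowerSeries ℝ) * (-1) ^ j * expNeg ^ j * B =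
        PowerSeries.C ((m.choose j : ℝ) * (-1) ^ j) *
          (hermGF ν * (expNeg ^ j * E)) := by
      rw [hB, hc]
      ring
    rw [this, PowerSeries.coeff_C_mul, expNeg_pow_mul_rescale_exp]
  rw [step1, hQ, Finset.sum_mul, map_sum, Finset.mul_sum]
  apply Finset.sum_congr rfl
  intro m hm
  rw [mul_assoc, PowerSeries.coeff_C_mul, step2 m]
  simp only [Finset.mul_sum]
  apply Finset.sum_congr rfl
  intro j hj
  rw [Herm]
  ring
end

section
/- For all nonnegative integers n, HB_n^{(ν,k)}(x) = \sum_{l=0}^{\lfloor n/2 \rfloor} \sum_{j=0}^{n} \left( \sum_{m=j}^{n} \binom{n}{2l} \frac{(2l)!}{l!} (-ν/2)^l \frac{(-1)^j \binom{m}{j}}{(m+1)^k} \right) (x-j)^{n-2l}. -/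
open PowerSeries Finset

lemma coeff_rescale_exp (c : ℝ) (p : ℕ) :
    coeff p (rescale c (exp ℝ)) = c ^ p / p.factorial := by
  rw [coeff_rescale, coeff_exp]
  simp [div_eq_mul_inv]

lemma X_dvd_onesub : (X : PowerSeries ℝ) ∣ (1 - expNeg) := by
  rw [X_dvd_iff, map_sub]
  have : constantCoeff expNeg = 1 := by
    rw [expNeg, ← coeff_zero_eq_constantCoeff_apply, coeff_rescale, coeff_exp]; simp
  rw [this]; simp

lemma coeff_onesub_pow_mul_zero {i m : ℕ} (h : i < m) (g : PowerSeries ℝ) :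
    coeff i ((1 - expNeg) ^ m * g) = 0 := by
  have : (X : PowerSeries ℝ) ^ m ∣ (1 - expNeg) ^ m * g :=
    Dvd.dvd.mul_right (pow_dvd_pow_of_dvd X_dvd_onesub m) g
  exact X_pow_dvd_iff.mp this i h

lemma coeff_onesub_pow_zero {i m : ℕ} (h : i < m) :
    coeff i ((1 - expNeg) ^ m) = 0 := by
  simpa using coeff_onesub_pow_mul_zero h 1

lemma onesub_pow_mul (m : ℕ) (x : ℝ) :
    (1 - expNeg) ^ m * rescale x (exp ℝ) =
      ∑ j ∈ range (m + 1), C ((-1 : ℝ) ^ j * (m.choose j : ℝ)) * rescale (x - j) (exp ℝ) := by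
  have hpow : ∀ j : ℕ, expNeg ^ j = rescale (-(j : ℝ)) (exp ℝ) := by
    intro j
    rw [expNeg, ← map_pow, exp_pow_eq_rescale_exp, rescale_rescale]
    norm_num
  rw [sub_pow, Finset.sum_mul, ← Finset.sum_range_reflect]
  apply Finset.sum_congr rfl
  intro j hj
  simp only [mem_range] at hj
  have hj' : j ≤ m := Nat.lt_succ_iff.mp hj
  have h1 : m + 1 - 1 - j = m - j := by omega
  have e1 : m - (m - j) = j := by omega
  rw [h1, e1]
  have key : rescale (-(j : ℝ)) (exp ℝ) * rescale x (exp ℝ)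
      = rescale (x - (j : ℝ)) (exp ℝ) := by
    rw [exp_mul_exp_eq_exp_add]; ring_nf
  have hsign : ((-1 : PowerSeries ℝ)) ^ (m - j + m) = (-1) ^ j := by
    rw [show m - j + m = j + 2 * (m - j) by omega, pow_add, pow_mul]; simp
  have h2 : (-1 : PowerSeries ℝ) ^ (m - j + m) * 1 ^ (m - j) * expNeg ^ j
        * (m.choose (m - j) : PowerSeries ℝ) * rescale x (exp ℝ)
      = ((-1 : PowerSeries ℝ) ^ (m - j + m) * (m.choose (m - j) : PowerSeries ℝ))
        * (expNeg ^ j * rescale x (exp ℝ)) := by ring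
  rw [h2, hpow j, key, hsign, map_mul, map_pow, map_neg, map_one, map_natCast,
    Nat.choose_symm hj']

lemma coeff_onesub_pow_mul_exp (m : ℕ) (x : ℝ) (p : ℕ) :
    coeff p ((1 - expNeg) ^ m * rescale x (exp ℝ)) =
      ∑ j ∈ range (m + 1), (-1 : ℝ) ^ j * (m.choose j : ℝ) * ((x - j) ^ p / p.factorial) := by
  rw [onesub_pow_mul, map_sum]
  apply Finset.sum_congr rfl
  intro j _
  rw [coeff_C_mul, coeff_rescale_exp]

lemma inner_sum_zero {m p : ℕ} (h : p < m) (x : ℝ) :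
    ∑ j ∈ range (m + 1), (-1 : ℝ) ^ j * (m.choose j : ℝ) * ((x - j) ^ p / p.factorial) = 0 := by
  rw [← coeff_onesub_pow_mul_exp]
  exact coeff_onesub_pow_mul_zero h _

lemma coeff_pb_mul (k : ℤ) (x : ℝ) {p n : ℕ} (hpn : p ≤ n) :
    coeff p (pbGF k * rescale x (exp ℝ)) =
      ∑ m ∈ range (n + 1), (1 / ((m : ℝ) + 1) ^ k) *
        ∑ j ∈ range (m + 1), (-1 : ℝ) ^ j * (m.choose j : ℝ) * ((x - j) ^ p / p.factorial) := by
  set Q : PowerSeries ℝ := ∑ m ∈ range (n + 1), C (1 / ((m : ℝ) + 1) ^ k) * (1 - expNeg) ^ m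
    with hQ
  have step1 : ∀ i ≤ n, coeff i (pbGF k) = coeff i Q := by
    intro i hi
    rw [hQ, map_sum, pbGF, coeff_mk]
    have hsub : range (i + 1) ⊆ range (n + 1) := Finset.range_subset_range.mpr (by omega)
    rw [Finset.sum_subset hsub (fun m _ hm => by
      simp only [mem_range, not_lt] at hm
      rw [coeff_onesub_pow_zero (by omega), mul_zero])]
    exact Finset.sum_congr rfl fun m _ => (coeff_C_mul _ _ _).symm
  have step2 : coeff p (pbGF k * rescale x (exp ℝ)) = coeff p (Q * rescale x (exp ℝ)) := by
    rw [coeff_mul, coeff_mul]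
    refine Finset.sum_congr rfl fun ab hab => ?_
    rw [Finset.HasAntidiagonal.mem_antidiagonal] at hab
    rw [step1 ab.1 (by omega)]
  rw [step2, hQ, Finset.sum_mul, map_sum]
  apply Finset.sum_congr rfl
  intro m _
  rw [mul_assoc, coeff_C_mul, coeff_onesub_pow_mul_exp]

theorem HB_eq_sum_powers (ν : ℝ) (hν : ν ≠ 0) (k : ℤ) (n : ℕ) (x : ℝ) :
    HB ν k n x = ∑ l ∈ Finset.range (n / 2 + 1), ∑ j ∈ Finset.range (n + 1),
      (∑ m ∈ Finset.Icc j n,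
        (n.choose (2 * l) : ℝ) * (Nat.factorial (2 * l)) / (Nat.factorial l) *
          (-ν / 2) ^ l * ((-1) ^ j * (m.choose j : ℝ) / ((m : ℝ) + 1) ^ k)) *
        (x - j) ^ (n - 2 * l) := by
  have hmain : HB ν k n x = ∑ q ∈ range (n + 1),
      (n.factorial : ℝ) * (coeff q (hermGF ν) * coeff (n - q) (pbGF k * rescale x (exp ℝ))) := by
    rw [HB, mul_assoc, coeff_mul, Finset.Nat.sum_antidiagonal_eq_sum_range_succ_mk, Finset.mul_sum]
  set f : ℕ → ℝ := fun q =>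
    (n.factorial : ℝ) * (coeff q (hermGF ν) * coeff (n - q) (pbGF k * rescale x (exp ℝ)))
    with hf
  have h0 : ∀ q, ¬ Even q → f q = 0 := by
    intro q hq
    simp only [hf, hermGF, coeff_mk, if_neg hq, zero_mul, mul_zero]
  have e1 : ∑ q ∈ range (n + 1), f q = ∑ q ∈ (range (n + 1)).filter (fun q => Even q), f q := by
    refine (Finset.sum_filter_of_ne fun q _ h => ?_).symm
    by_contra hq; exact h (h0 q hq)
  have e2 : ∑ q ∈ (range (n + 1)).filter (fun q => Even q), f q
      = ∑ l ∈ range (n / 2 + 1), f (2 * l) := by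
    refine Finset.sum_nbij' (fun q => q / 2) (fun l => 2 * l) ?_ ?_ ?_ ?_ ?_
    · intro a ha
      simp only [mem_filter, mem_range] at ha
      simp only [mem_range]; omega
    · intro a ha
      simp only [mem_range] at ha
      simp only [mem_filter, mem_range]
      exact ⟨by omega, even_two_mul a⟩
    · intro a ha
      simp only [mem_filter, mem_range] at ha
      obtain ⟨c, hc⟩ := ha.2; omega
    · intro a _; omega
    · intro a ha
      simp only [mem_filter, mem_range] at ha
      obtain ⟨c, hc⟩ := ha.2
      congr 1; omega
  rw [hmain, e1, e2]
  apply Finset.sum_congr rfl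
  intro l hl
  simp only [mem_range] at hl
  have h2l : 2 * l ≤ n := by omega
  have hcoeffh : coeff (2 * l) (hermGF ν) = (-ν / 2) ^ l / (l.factorial : ℝ) := by
    rw [hermGF, coeff_mk, if_pos (even_two_mul l), Nat.mul_div_cancel_left l (by norm_num)]
  have hP : n - 2 * l ≤ n := by omega
  simp only [hf]
  rw [hcoeffh, coeff_pb_mul k x hP]
  -- now swap sums on LHS
  have swap : (∑ m ∈ range (n + 1), (1 / ((m : ℝ) + 1) ^ k) *
        ∑ j ∈ range (m + 1), (-1 : ℝ) ^ j * (m.choose j : ℝ)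
          * ((x - j) ^ (n - 2 * l) / (n - 2 * l).factorial))
      = ∑ j ∈ range (n + 1), ∑ m ∈ Icc j n, (1 / ((m : ℝ) + 1) ^ k) *
          ((-1 : ℝ) ^ j * (m.choose j : ℝ) * ((x - j) ^ (n - 2 * l) / (n - 2 * l).factorial)) := by
    simp_rw [Finset.mul_sum]
    refine Finset.sum_comm' ?_
    intro m j
    simp only [mem_range, mem_Icc]
    omega
  rw [swap]
  simp only [Finset.mul_sum]
  apply Finset.sum_congr rfl
  intro j _
  rw [Finset.sum_mul]
  apply Finset.sum_congr rfl
  intro m _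
  have hfac : (n.factorial : ℝ)
      = (n.choose (2 * l) : ℝ) * ((2 * l).factorial : ℝ) * ((n - 2 * l).factorial : ℝ) := by
    exact_mod_cast (Nat.choose_mul_factorial_mul_factorial h2l).symm
  have hw : ((m : ℝ) + 1) ^ k ≠ 0 := zpow_ne_zero _ (by positivity)
  have hfl : (l.factorial : ℝ) ≠ 0 := Nat.cast_ne_zero.mpr (Nat.factorial_ne_zero l)
  have hfP : ((n - 2 * l).factorial : ℝ) ≠ 0 := Nat.cast_ne_zero.mpr (Nat.factorial_ne_zero _)
  rw [hfac]
  field_simp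
end

section
/- For all nonnegative integers n, HB_n^{(ν,k)}(x) = (-1)^n \sum_{a=0}^{n} \left( \sum_{m=0}^{n-a} \frac{(-1)^{a+m} m!}{(m+1)^k} \binom{n}{a} S_2(n-a,m) \right) H_a^{(ν)}(x), where S_2(n,m) denotes the Stirling numbers of the second kind and H_a^{(ν)} the Hermite polynomials of order ν. -/
open PowerSeries Finset

/-! ### Auxiliary lemmas -/

lemma derivFun_exp : PowerSeries.derivativeFun (PowerSeries.exp ℝ) = PowerSeries.exp ℝ := by
  ext n
  erw [PowerSeries.coeff_derivativeFun, PowerSeries.coeff_exp, PowerSeries.coeff_exp]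
  have : ((n+1).factorial : ℝ) = (n+1) * n.factorial := by
    rw [Nat.factorial_succ]; push_cast; ring
  simp only [eq_ratCast, Rat.cast_div, Rat.cast_one, Rat.cast_natCast]
  rw [this]
  have h1 : (n.factorial : ℝ) ≠ 0 := Nat.cast_ne_zero.mpr n.factorial_ne_zero
  have h2 : ((n:ℝ) + 1) ≠ 0 := by positivity
  field_simp

lemma derivFun_expm1 : PowerSeries.derivativeFun (PowerSeries.exp ℝ - 1)
    = PowerSeries.exp ℝ := by
  rw [sub_eq_add_neg, PowerSeries.derivativeFun_add, derivFun_exp]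
  have : PowerSeries.derivativeFun (-1 : ℝ⟦X⟧) = 0 := by
    have := PowerSeries.derivativeFun_smul (-1 : ℝ) (1 : ℝ⟦X⟧)
    simpa [PowerSeries.derivativeFun_one] using this
  rw [this, add_zero]

lemma derivFun_expm1_pow (m : ℕ) :
    PowerSeries.derivativeFun ((PowerSeries.exp ℝ - 1) ^ (m+1))
      = ((m+1 : ℕ) : ℝ⟦X⟧) * ((PowerSeries.exp ℝ - 1) ^ (m+1) + (PowerSeries.exp ℝ - 1) ^ m) := by
  induction m with
  | zero =>
    rw [pow_one, derivFun_expm1]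
    push_cast
    ring
  | succ m ih =>
    have : (PowerSeries.exp ℝ - 1) ^ (m+2) = (PowerSeries.exp ℝ - 1) ^ (m+1) * (PowerSeries.exp ℝ - 1) := by ring
    rw [this, PowerSeries.derivativeFun_mul, ih, derivFun_expm1, smul_eq_mul, smul_eq_mul]
    push_cast
    ring

lemma coeff_expm1_pow (j m : ℕ) :
    (j.factorial : ℝ) * PowerSeries.coeff j ((PowerSeries.exp ℝ - 1) ^ m)
      = (m.factorial : ℝ) * S2 j m := by
  induction j generalizing m with
  | zero =>
    rw [PowerSeries.coeff_zero_eq_constantCoeff, map_pow]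
    have : PowerSeries.constantCoeff (PowerSeries.exp ℝ - 1) = 0 := by
      simp [PowerSeries.constantCoeff_exp]
    rw [this]
    cases m with
    | zero => simp [S2]
    | succ m => simp [S2, zero_pow]
  | succ j ih =>
    cases m with
    | zero =>
      simp only [pow_zero, PowerSeries.coeff_one, S2]
      simp
    | succ m =>
      have h := congrArg (PowerSeries.coeff j) (derivFun_expm1_pow m)
      erw [PowerSeries.coeff_derivativeFun] at h
      have hc : (((m+1:ℕ) : ℝ⟦X⟧)) = PowerSeries.C ((m+1:ℕ) : ℝ) := by
        push_cast; simp
      rw [hc, PowerSeries.coeff_C_mul, map_add] at h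
      have key : ((j+1).factorial : ℝ) * PowerSeries.coeff (j+1) ((PowerSeries.exp ℝ - 1) ^ (m+1))
          = ((m+1:ℕ):ℝ) * ((j.factorial : ℝ) * PowerSeries.coeff j ((PowerSeries.exp ℝ - 1) ^ (m+1))
              + (j.factorial : ℝ) * PowerSeries.coeff j ((PowerSeries.exp ℝ - 1) ^ m)) := by
        have : ((j+1).factorial : ℝ) = (j.factorial : ℝ) * ((j:ℝ)+1) := by
          rw [Nat.factorial_succ]; push_cast; ring
        rw [this]
        calc (j.factorial : ℝ) * ((j:ℝ)+1) * PowerSeries.coeff (j+1) ((PowerSeries.exp ℝ - 1) ^ (m+1))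
            = (j.factorial : ℝ) * (PowerSeries.coeff (j+1) ((PowerSeries.exp ℝ - 1) ^ (m+1)) * ((j:ℝ)+1)) := by ring
          _ = (j.factorial : ℝ) * (((m+1:ℕ):ℝ) * (PowerSeries.coeff j ((PowerSeries.exp ℝ - 1) ^ (m+1)) + PowerSeries.coeff j ((PowerSeries.exp ℝ - 1) ^ m))) := by
              rw [h]
          _ = _ := by ring
      rw [key, ih (m+1), ih m]
      show _ = ((m+1).factorial : ℝ) * (S2 (j+1) (m+1) : ℝ)
      have : S2 (j+1) (m+1) = (m+1) * S2 j (m+1) + S2 j m := rfl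
      rw [this, Nat.factorial_succ]
      push_cast
      ring

lemma coeff_one_sub_expNeg_pow_s3 (j m : ℕ) :
    (j.factorial : ℝ) * PowerSeries.coeff j ((1 - expNeg) ^ m)
      = (-1:ℝ)^(j+m) * (m.factorial : ℝ) * S2 j m := by
  have h1 : (1 - expNeg) ^ m = rescale (-1 : ℝ) ((1 - PowerSeries.exp ℝ) ^ m) := by
    rw [map_pow, map_sub, map_one, expNeg]
  rw [h1, PowerSeries.coeff_rescale]
  have h2 : (1 - PowerSeries.exp ℝ) ^ m = (-1 : ℝ⟦X⟧)^m * (PowerSeries.exp ℝ - 1) ^ m := by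
    rw [← neg_pow]; ring_nf
  rw [h2]
  have h3 : ((-1 : ℝ⟦X⟧)^m) = PowerSeries.C ((-1:ℝ)^m) := by
    rw [map_pow, map_neg, map_one]
  rw [h3, PowerSeries.coeff_C_mul]
  have := coeff_expm1_pow j m
  calc (j.factorial : ℝ) * ((-1:ℝ)^j * ((-1:ℝ)^m * PowerSeries.coeff j ((PowerSeries.exp ℝ - 1) ^ m)))
      = (-1:ℝ)^(j+m) * ((j.factorial : ℝ) * PowerSeries.coeff j ((PowerSeries.exp ℝ - 1) ^ m)) := by
        rw [pow_add]; ring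
    _ = _ := by rw [this]; ring

lemma coeff_pbGF (k : ℤ) (j : ℕ) :
    (j.factorial : ℝ) * PowerSeries.coeff j (pbGF k)
      = ∑ m ∈ Finset.range (j+1),
          (-1:ℝ)^(j+m) * (m.factorial : ℝ) / ((m:ℝ)+1)^k * S2 j m := by
  rw [pbGF, PowerSeries.coeff_mk, Finset.mul_sum]
  refine Finset.sum_congr rfl fun m _ => ?_
  rw [show (j.factorial : ℝ) * (1 / ((m:ℝ)+1)^k * PowerSeries.coeff j ((1 - expNeg) ^ m))
      = ((j.factorial : ℝ) * PowerSeries.coeff j ((1 - expNeg) ^ m)) * (1 / ((m:ℝ)+1)^k) by ring,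
    coeff_one_sub_expNeg_pow_s3]
  ring

theorem HB_eq_sum_stirling_hermite (ν : ℝ) (hν : ν ≠ 0) (k : ℤ) (n : ℕ) (x : ℝ) :
    HB ν k n x = (-1) ^ n * ∑ a ∈ Finset.range (n + 1),
      (∑ m ∈ Finset.range (n - a + 1),
        ((-1) ^ (a + m) * (Nat.factorial m : ℝ) / ((m : ℝ) + 1) ^ k) *
          (n.choose a : ℝ) * (S2 (n - a) m : ℝ)) * Herm ν a x := by
  have hre : hermGF ν * pbGF k * rescale x (PowerSeries.exp ℝ)
      = pbGF k * (hermGF ν * rescale x (PowerSeries.exp ℝ)) := by ring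
  rw [HB, hre, PowerSeries.coeff_mul, Finset.Nat.sum_antidiagonal_eq_sum_range_succ_mk]
  have reflect := Finset.sum_range_reflect
    (fun i => PowerSeries.coeff i (pbGF k) *
      PowerSeries.coeff (n - i) (hermGF ν * rescale x (PowerSeries.exp ℝ))) (n+1)
  simp only [Nat.add_sub_cancel] at reflect
  rw [← reflect, Finset.mul_sum, Finset.mul_sum]
  refine Finset.sum_congr rfl fun a ha => ?_
  have haLe : a ≤ n := Nat.lt_succ_iff.mp (Finset.mem_range.mp ha)
  have hsub : n - (n - a) = a := Nat.sub_sub_self haLe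
  rw [hsub]
  rw [Herm]
  have hfac : (n.factorial : ℝ) = (n.choose a : ℝ) * (a.factorial : ℝ) * ((n-a).factorial : ℝ) := by
    rw [← Nat.choose_mul_factorial_mul_factorial haLe]; push_cast; ring
  have hpb := coeff_pbGF k (n - a)
  calc (n.factorial : ℝ) * (PowerSeries.coeff (n-a) (pbGF k) *
          PowerSeries.coeff a (hermGF ν * rescale x (PowerSeries.exp ℝ)))
      = (n.choose a : ℝ) * (((n-a).factorial : ℝ) * PowerSeries.coeff (n-a) (pbGF k)) *
          ((a.factorial : ℝ) * PowerSeries.coeff a (hermGF ν * rescale x (PowerSeries.exp ℝ))) := by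
        rw [hfac]; ring
    _ = (n.choose a : ℝ) * (∑ m ∈ Finset.range (n-a+1),
          (-1:ℝ)^((n-a)+m) * (m.factorial : ℝ) / ((m:ℝ)+1)^k * S2 (n-a) m) *
          ((a.factorial : ℝ) * PowerSeries.coeff a (hermGF ν * rescale x (PowerSeries.exp ℝ))) := by
        rw [hpb]
    _ = _ := by
        simp only [Finset.mul_sum, Finset.sum_mul]
        refine Finset.sum_congr rfl fun m _ => ?_
        have hsign : ((-1:ℝ))^(n - a + m) = (-1)^n * (-1)^(a+m) := by
          have he : n + (a + m) = (n - a + m) + 2*a := by omega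
          have h2 : ((-1:ℝ))^(2*a) = 1 := by rw [pow_mul]; norm_num
          calc ((-1:ℝ))^(n-a+m) = (-1)^(n-a+m) * (-1)^(2*a) := by rw [h2, mul_one]
            _ = (-1)^(n-a+m+2*a) := by rw [← pow_add]
            _ = (-1)^(n+(a+m)) := by rw [← he]
            _ = (-1)^n * (-1)^(a+m) := by rw [pow_add]
        rw [hsign]
        ring
end

section
/- For all nonnegative integers n, HB_n^{(ν,k)}(x) = \sum_{j=0}^{n} \left( \sum_{l=0}^{\lfloor (n-j)/2 \rfloor} \binom{n}{j} \binom{n-j}{2l} \frac{(2l)!}{l!} (-ν/2)^l B_{n-j-2l}^{(k)} \right) x^j, where B_m^{(k)} = B_m^{(k)}(0) are the poly-Bernoulli numbers. -/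
open PowerSeries Finset

lemma sum_even_aux (m : ℕ) (f : ℕ → ℝ) :
    ∑ i ∈ range (m+1), (if Even i then f (i/2) else 0) = ∑ l ∈ range (m/2+1), f l := by
  induction m with
  | zero => simp
  | succ m ih =>
    rw [Finset.sum_range_succ, ih]
    by_cases h : Even (m+1)
    · rw [Nat.even_iff] at h
      have h2 : (m+1)/2 = m/2 + 1 := by omega
      rw [if_pos (Nat.even_iff.mpr h), h2]
      exact (Finset.sum_range_succ f (m/2+1)).symm
    · rw [Nat.even_iff] at h
      have h2 : (m+1)/2 = m/2 := by omega
      rw [if_neg (by rw [Nat.even_iff]; omega : ¬ Even (m+1)), h2, add_zero]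


theorem HB_conjugate_representation (ν : ℝ) (hν : ν ≠ 0) (k : ℤ) (n : ℕ) (x : ℝ) :
    HB ν k n x = ∑ j ∈ Finset.range (n + 1),
      (∑ l ∈ Finset.range ((n - j) / 2 + 1),
        (n.choose j : ℝ) * ((n - j).choose (2 * l) : ℝ) *
          (Nat.factorial (2 * l)) / (Nat.factorial l) * (-ν / 2) ^ l *
          pB k (n - j - 2 * l) 0) * x ^ j := by
  have h0 : rescale (0:ℝ) (PowerSeries.exp ℝ) = 1 := by
    rw [rescale_zero]; simp [PowerSeries.constantCoeff_exp]
  have hpB : ∀ m : ℕ, pB k m 0 = (m.factorial : ℝ) * PowerSeries.coeff m (pbGF k) := by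
    intro m; simp [pB, h0]
  rw [HB, PowerSeries.coeff_mul, Finset.Nat.sum_antidiagonal_eq_sum_range_succ_mk,
    ← Finset.sum_range_reflect, Finset.mul_sum]
  refine Finset.sum_congr rfl fun j hj => ?_
  have hjn : j ≤ n := Nat.lt_succ_iff.mp (Finset.mem_range.mp hj)
  simp only []
  have hidx : n + 1 - 1 - j = n - j := by omega
  have hidx2 : n - (n - j) = j := by omega
  rw [hidx, hidx2]
  have hE : PowerSeries.coeff j (rescale x (PowerSeries.exp ℝ)) = x ^ j / (j.factorial : ℝ) := by
    simp [coeff_rescale, PowerSeries.coeff_exp]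
    ring
  rw [hE, PowerSeries.coeff_mul, Finset.Nat.sum_antidiagonal_eq_sum_range_succ_mk]
  have hinner : ∀ i ∈ range (n - j + 1),
      PowerSeries.coeff i (hermGF ν) * PowerSeries.coeff (n - j - i) (pbGF k)
      = if Even i then ((-ν / 2) ^ (i/2) / (Nat.factorial (i/2)) *
          PowerSeries.coeff (n - j - 2 * (i/2)) (pbGF k)) else 0 := by
    intro i hi
    rw [hermGF, PowerSeries.coeff_mk]
    by_cases h : Even i
    · rw [if_pos h, if_pos h]
      have : 2 * (i / 2) = i := by
        rw [Nat.even_iff] at h; omega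
      rw [this]
    · rw [if_neg h, if_neg h, zero_mul]
  have hrw : (∑ i ∈ range (n - j + 1),
      PowerSeries.coeff i (hermGF ν) * PowerSeries.coeff (n - j - i) (pbGF k))
      = ∑ l ∈ range ((n - j) / 2 + 1), (-ν / 2) ^ l / (Nat.factorial l) *
          PowerSeries.coeff (n - j - 2 * l) (pbGF k) := by
    refine (Finset.sum_congr rfl hinner).trans ?_
    exact sum_even_aux (n - j) (fun l => (-ν / 2) ^ l / (Nat.factorial l) *
      PowerSeries.coeff (n - j - 2 * l) (pbGF k))
  rw [hrw, Finset.sum_mul, Finset.mul_sum, Finset.sum_mul]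
  refine Finset.sum_congr rfl fun l hl => ?_
  have hln : 2 * l ≤ n - j := by
    have := Nat.lt_succ_iff.mp (Finset.mem_range.mp hl); omega
  rw [hpB]
  have h1 := Nat.choose_mul_factorial_mul_factorial hjn
  have h2 := Nat.choose_mul_factorial_mul_factorial hln
  have key : (n.factorial : ℝ) = (n.choose j : ℝ) * ((n-j).choose (2*l) : ℝ) *
      ((2*l).factorial : ℝ) * ((n-j-2*l).factorial : ℝ) * (j.factorial : ℝ) := by
    have : n.factorial = n.choose j * ((n-j).choose (2*l)) *
        ((2*l).factorial) * ((n-j-2*l).factorial) * j.factorial := by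
      calc n.factorial = n.choose j * j.factorial * (n-j).factorial := h1.symm
      _ = n.choose j * j.factorial * (((n-j).choose (2*l)) * (2*l).factorial * (n-j-2*l).factorial) := by rw [h2]
      _ = _ := by ring
    exact_mod_cast this
  rw [key]
  have hjf : (j.factorial : ℝ) ≠ 0 := Nat.cast_ne_zero.mpr (Nat.factorial_ne_zero j)
  have hlf : (l.factorial : ℝ) ≠ 0 := Nat.cast_ne_zero.mpr (Nat.factorial_ne_zero l)
  field_simp
end

section
/- For all nonnegative integers n, HB_{n+1}^{(ν,k)}(x) = x · HB_n^{(ν,k)}(x) − ν n HB_{n-1}^{(ν,k)}(x) − \frac{1}{n+1} \sum_{l=0}^{n+1} \binom{n+1}{l} B_l ( HB_{n+1-l}^{(ν,k)}(x) − HB_{n+1-l}^{(ν,k-1)}(x) ), where B_l are the ordinary Bernoulli numbers (with B_1 = -1/2) and the term with HB_{n-1} is read as 0 when n = 0. -/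
open PowerSeries Finset

section Helpers

lemma expNeg_mul_exp : expNeg * PowerSeries.exp ℝ = 1 := by
  rw [expNeg, mul_comm]
  exact PowerSeries.exp_mul_exp_neg_eq_one

lemma constantCoeff_expNeg : constantCoeff expNeg = 1 := by
  have : coeff 0 expNeg = 1 := by
    rw [expNeg, coeff_rescale, coeff_exp]; simp
  rw [← coeff_zero_eq_constantCoeff_apply]; exact this

lemma derivative_expNeg : d⁄dX ℝ expNeg = -expNeg := by
  ext n
  rw [coeff_derivative, map_neg]
  rw [expNeg, coeff_rescale, coeff_rescale, coeff_exp, coeff_exp, Nat.factorial_succ]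
  have h2 : (n.factorial : ℝ) ≠ 0 := Nat.cast_ne_zero.2 (Nat.factorial_ne_zero _)
  have hn1 : ((n:ℝ) + 1) ≠ 0 := by positivity
  push_cast
  field_simp
  ring

lemma coeff_one_sub_expNeg_pow_s7 {n m : ℕ} (h : n < m) :
    coeff n ((1 - expNeg) ^ m) = 0 := by
  have hdvd : (X : PowerSeries ℝ) ^ m ∣ (1 - expNeg) ^ m := by
    apply pow_dvd_pow_of_dvd
    rw [PowerSeries.X_dvd_iff]
    simp [constantCoeff_expNeg]
  exact (PowerSeries.X_pow_dvd_iff.1 hdvd) n h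

/-- finite truncation of `pbGF` -/
noncomputable def pbP (k : ℤ) (N : ℕ) : PowerSeries ℝ :=
  ∑ m ∈ Finset.range N, PowerSeries.C (1 / ((m : ℝ) + 1) ^ k) * (1 - expNeg) ^ m

lemma coeff_pbGF_eq (k : ℤ) {n N : ℕ} (h : n < N) :
    coeff n (pbGF k) = coeff n (pbP k N) := by
  rw [pbGF, coeff_mk, pbP, map_sum]
  simp only [coeff_C_mul]
  apply Finset.sum_subset
  · intro m hm
    simp only [mem_range] at *
    omega
  · intro m hm hnm
    simp only [mem_range, not_lt] at hnm
    rw [coeff_one_sub_expNeg_pow_s7 (by omega), mul_zero]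

lemma pbP_deriv (k : ℤ) (N : ℕ) :
    (1 - expNeg) * d⁄dX ℝ (pbP k N) = expNeg * (pbP (k-1) N - pbP k N) := by
  unfold pbP
  simp only [map_sum, Finset.mul_sum, ← Finset.sum_sub_distrib]
  apply Finset.sum_congr rfl
  intro m _
  rw [Derivation.leibniz, Derivation.leibniz_pow]
  have hdu : d⁄dX ℝ (1 - expNeg) = expNeg := by
    rw [map_sub, derivative_expNeg]; simp
  rw [hdu, derivative_C]
  cases m with
  | zero => simp
  | succ j =>
    have hy : ((j:ℝ) + 1 + 1) ≠ 0 := by positivity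
    have hkey : (1 : ℝ) / ((j:ℝ) + 1 + 1) ^ (k - 1) =
        ((j:ℝ) + 1 + 1) * (1 / ((j:ℝ) + 1 + 1) ^ k) := by
      rw [zpow_sub₀ hy, zpow_one]
      field_simp
    push_cast
    rw [hkey, map_mul]
    simp only [smul_eq_mul, smul_zero, mul_zero, zero_smul, add_zero, Nat.add_sub_cancel,
      nsmul_eq_mul]
    push_cast
    have hC : (PowerSeries.C) ((j:ℝ) + 1 + 1) = ((j : PowerSeries ℝ) + 1 + 1) := by
      rw [map_add, map_add, map_one, map_natCast]
    rw [hC, pow_succ]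
    ring

lemma coeff_mul_congr (h f g : PowerSeries ℝ) (n : ℕ)
    (H : ∀ i ≤ n, coeff i f = coeff i g) :
    coeff n (h * f) = coeff n (h * g) := by
  rw [coeff_mul, coeff_mul]
  apply Finset.sum_congr rfl
  intro p hp
  rw [Finset.HasAntidiagonal.mem_antidiagonal] at hp
  rw [H p.2 (by omega)]

lemma pbGF_deriv (k : ℤ) :
    (1 - expNeg) * d⁄dX ℝ (pbGF k) = expNeg * (pbGF (k-1) - pbGF k) := by
  ext n
  have h1 : coeff n ((1 - expNeg) * d⁄dX ℝ (pbGF k)) =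
      coeff n ((1 - expNeg) * d⁄dX ℝ (pbP k (n+2))) := by
    apply coeff_mul_congr
    intro i hi
    rw [coeff_derivative, coeff_derivative, coeff_pbGF_eq k (by omega : i + 1 < n + 2)]
  have h2 : coeff n (expNeg * (pbGF (k-1) - pbGF k)) =
      coeff n (expNeg * (pbP (k-1) (n+2) - pbP k (n+2))) := by
    apply coeff_mul_congr
    intro i hi
    rw [map_sub, map_sub, coeff_pbGF_eq k (by omega : i < n + 2),
      coeff_pbGF_eq (k-1) (by omega : i < n + 2)]
  rw [h1, h2, pbP_deriv k (n+2)]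

lemma derivative_hermGF (ν : ℝ) :
    d⁄dX ℝ (hermGF ν) = PowerSeries.C (-ν) * (X * hermGF ν) := by
  ext n
  rw [coeff_derivative, coeff_C_mul]
  cases n with
  | zero =>
    simp [hermGF, coeff_mk, Nat.not_even_one]
  | succ m =>
    rw [coeff_succ_X_mul]
    simp only [hermGF, coeff_mk]
    rcases Nat.even_or_odd m with he | ho
    · obtain ⟨j, hj⟩ := he
      have hm : m = 2 * j := by omega
      have h1 : Even (m + 1 + 1) := ⟨j + 1, by omega⟩
      rw [if_pos h1, if_pos ⟨j, hj⟩]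
      have h2 : (m + 1 + 1) / 2 = j + 1 := by omega
      have h3 : m / 2 = j := by omega
      rw [h2, h3, Nat.factorial_succ, pow_succ]
      have hfac : (j.factorial : ℝ) ≠ 0 := Nat.cast_ne_zero.2 (Nat.factorial_ne_zero _)
      have hj1 : ((j:ℝ) + 1) ≠ 0 := by positivity
      push_cast
      field_simp
      ring_nf
      rw [hm]
      push_cast
      ring
    · obtain ⟨j, hj⟩ := ho
      have h1 : ¬ Even (m + 1 + 1) := by rintro ⟨i, hi⟩; omega
      have h2 : ¬ Even m := by rintro ⟨i, hi⟩; omega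
      rw [if_neg h1, if_neg h2]
      ring

lemma derivative_rescale_exp (x : ℝ) :
    d⁄dX ℝ (rescale x (PowerSeries.exp ℝ)) = PowerSeries.C x * rescale x (PowerSeries.exp ℝ) := by
  ext n
  rw [coeff_derivative, coeff_C_mul, coeff_rescale, coeff_rescale, coeff_exp, coeff_exp,
    Nat.factorial_succ]
  have hfac : (n.factorial : ℝ) ≠ 0 := Nat.cast_ne_zero.2 (Nat.factorial_ne_zero _)
  have hn1 : ((n:ℝ) + 1) ≠ 0 := by positivity
  push_cast
  field_simp
  ring

lemma X_mul_derivative_pbGF (k : ℤ) :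
    (X : PowerSeries ℝ) * d⁄dX ℝ (pbGF k) =
      bernoulliPowerSeries ℝ * (pbGF (k-1) - pbGF k) := by
  have hX := bernoulliPowerSeries_mul_exp_sub_one (A := ℝ)
  have h1 : (PowerSeries.exp ℝ - 1) * d⁄dX ℝ (pbGF k) = pbGF (k-1) - pbGF k := by
    have : PowerSeries.exp ℝ - 1 = PowerSeries.exp ℝ * (1 - expNeg) := by
      rw [mul_sub, mul_one, mul_comm, expNeg_mul_exp]
    rw [this, mul_assoc, pbGF_deriv k, ← mul_assoc, mul_comm (PowerSeries.exp ℝ) expNeg,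
      expNeg_mul_exp, one_mul]
  calc (X : PowerSeries ℝ) * d⁄dX ℝ (pbGF k)
      = bernoulliPowerSeries ℝ * ((PowerSeries.exp ℝ - 1) * d⁄dX ℝ (pbGF k)) := by
        rw [← mul_assoc, hX]
    _ = bernoulliPowerSeries ℝ * (pbGF (k-1) - pbGF k) := by rw [h1]

lemma main_identity (ν : ℝ) (k : ℤ) (x : ℝ) :
    (X : PowerSeries ℝ) * d⁄dX ℝ (hermGF ν * pbGF k * rescale x (PowerSeries.exp ℝ)) =
      PowerSeries.C x * (X * (hermGF ν * pbGF k * rescale x (PowerSeries.exp ℝ)))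
      - PowerSeries.C ν * (X^2 * (hermGF ν * pbGF k * rescale x (PowerSeries.exp ℝ)))
      + bernoulliPowerSeries ℝ *
          (hermGF ν * (pbGF (k-1) - pbGF k) * rescale x (PowerSeries.exp ℝ)) := by
  have hD : d⁄dX ℝ (hermGF ν * pbGF k * rescale x (PowerSeries.exp ℝ)) =
      d⁄dX ℝ (hermGF ν) * (pbGF k * rescale x (PowerSeries.exp ℝ))
      + hermGF ν * (d⁄dX ℝ (pbGF k)) * rescale x (PowerSeries.exp ℝ)
      + hermGF ν * pbGF k * d⁄dX ℝ (rescale x (PowerSeries.exp ℝ)) := by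
    rw [Derivation.leibniz, Derivation.leibniz]
    simp only [smul_eq_mul]
    ring
  rw [hD, derivative_hermGF, derivative_rescale_exp, map_neg]
  have h2 := X_mul_derivative_pbGF k
  have h3 : (X : PowerSeries ℝ) * (hermGF ν * (d⁄dX ℝ (pbGF k)) * rescale x (PowerSeries.exp ℝ))
      = bernoulliPowerSeries ℝ * (hermGF ν * (pbGF (k-1) - pbGF k) * rescale x (PowerSeries.exp ℝ)) := by
    calc (X : PowerSeries ℝ) * (hermGF ν * (d⁄dX ℝ (pbGF k)) * rescale x (PowerSeries.exp ℝ))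
        = (X * d⁄dX ℝ (pbGF k)) * (hermGF ν * rescale x (PowerSeries.exp ℝ)) := by ring
      _ = _ := by rw [h2]; ring
  linear_combination h3

end Helpers

theorem HB_recurrence (ν : ℝ) (hν : ν ≠ 0) (k : ℤ) (n : ℕ) (x : ℝ) :
    HB ν k (n + 1) x = x * HB ν k n x - ν * n * HB ν k (n - 1) x -
      (1 / ((n : ℝ) + 1)) * ∑ l ∈ Finset.range (n + 2),
        ((n + 1).choose l : ℝ) * (bernoulli l : ℝ) *
          (HB ν k (n + 1 - l) x - HB ν (k - 1) (n + 1 - l) x) := by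
  set c : ℕ → ℝ := fun j => coeff j (hermGF ν * pbGF k * rescale x (PowerSeries.exp ℝ)) with hc
  set c' : ℕ → ℝ := fun j => coeff j (hermGF ν * pbGF (k-1) * rescale x (PowerSeries.exp ℝ)) with hc'
  have hHB : ∀ j, HB ν k j x = (j.factorial : ℝ) * c j := fun j => rfl
  have hHB' : ∀ j, HB ν (k-1) j x = (j.factorial : ℝ) * c' j := fun j => rfl
  have hB : ∀ f : PowerSeries ℝ, coeff (n+1) (bernoulliPowerSeries ℝ * f)
      = ∑ l ∈ Finset.range (n+2), ((bernoulli l : ℝ) / (l.factorial : ℝ)) * coeff (n+1-l) f := by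
    intro f
    rw [coeff_mul, Finset.Nat.sum_antidiagonal_eq_sum_range_succ_mk]
    apply Finset.sum_congr rfl
    intro l _
    rw [bernoulliPowerSeries, coeff_mk, eq_ratCast (algebraMap ℚ ℝ), Rat.cast_div,
      Rat.cast_natCast]
  have hG : hermGF ν * (pbGF (k-1) - pbGF k) * rescale x (PowerSeries.exp ℝ)
      = (hermGF ν * pbGF (k-1) * rescale x (PowerSeries.exp ℝ))
        - (hermGF ν * pbGF k * rescale x (PowerSeries.exp ℝ)) := by ring
  have key : c (n+1) * ((n:ℝ)+1) = x * c n
      - ν * (if 1 ≤ n then c (n-1) else 0)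
      + ∑ l ∈ Finset.range (n+2),
          ((bernoulli l : ℝ) / (l.factorial : ℝ)) * (c' (n+1-l) - c (n+1-l)) := by
    have h := congrArg (coeff (n+1)) (main_identity ν k x)
    rw [coeff_succ_X_mul, coeff_derivative, map_add, map_sub, coeff_C_mul, coeff_C_mul,
      coeff_succ_X_mul, coeff_X_pow_mul', hG, hB] at h
    simp only [map_sub] at h
    push_cast at h
    convert h using 2
  have hfs : (((n+1).factorial : ℕ) : ℝ) = ((n:ℝ)+1) * (n.factorial : ℝ) := by
    rw [Nat.factorial_succ]; push_cast; ring
  have hX2 : ν * (if 1 ≤ n then c (n-1) else 0) * (n.factorial : ℝ)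
      = ν * n * ((((n-1).factorial : ℕ) : ℝ) * c (n-1)) := by
    cases n with
    | zero => simp
    | succ m =>
      rw [if_pos (by omega)]
      simp only [Nat.add_sub_cancel, Nat.factorial_succ]
      push_cast
      ring
  have hsum : (1 / ((n : ℝ) + 1)) * ∑ l ∈ Finset.range (n + 2),
        ((n + 1).choose l : ℝ) * (bernoulli l : ℝ) *
          ((((n+1-l).factorial : ℕ) : ℝ) * c (n+1-l) - (((n+1-l).factorial : ℕ) : ℝ) * c' (n+1-l))
      = -((n.factorial : ℝ) * ∑ l ∈ Finset.range (n+2),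
          ((bernoulli l : ℝ) / (l.factorial : ℝ)) * (c' (n+1-l) - c (n+1-l))) := by
    rw [Finset.mul_sum, Finset.mul_sum, ← Finset.sum_neg_distrib]
    apply Finset.sum_congr rfl
    intro l hl
    rw [Finset.mem_range] at hl
    have hl' : l ≤ n + 1 := by omega
    have hcf : ((n+1).choose l : ℝ) * (l.factorial : ℝ) * (((n+1-l).factorial : ℕ) : ℝ)
        = (((n+1).factorial : ℕ) : ℝ) := by
      exact_mod_cast congrArg (Nat.cast : ℕ → ℝ) (Nat.choose_mul_factorial_mul_factorial hl')
    have hlf : ((l.factorial : ℕ) : ℝ) ≠ 0 := Nat.cast_ne_zero.2 (Nat.factorial_ne_zero _)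
    have hn1 : ((n:ℝ) + 1) ≠ 0 := by positivity
    rw [hfs] at hcf
    field_simp
    linear_combination ((bernoulli l : ℝ) * (c (n+1-l) - c' (n+1-l))) * hcf
  simp only [hHB, hHB']
  linear_combination (n.factorial : ℝ) * key + hsum - hX2 + c (n+1) * hfs
end

section
/- For all nonnegative integers n and r, HB_n^{(ν,k)}(x) = \sum_{m=0}^{n} \left( \binom{n}{m} \sum_{l=0}^{n-m} \frac{\binom{n-m}{l}}{\binom{l+r}{r}} S_2(l+r,r) HB_{n-m-l}^{(ν,k)} \right) \mathbb{B}_m^{(r)}(x), where \mathbb{B}_m^{(r)}(x) are the Bernoulli polynomials of order r and S_2 the Stirling numbers of the second kind. -/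
open PowerSeries Finset

/-- Bernoulli polynomials of order r, via the generating function (t/(e^t-1))^r e^{xt};
here `PowerSeries.mk fun i => 1/(i+1)!` is the series (e^t-1)/t. -/
noncomputable def bernPoly (r : ℕ) (n : ℕ) (x : ℝ) : ℝ :=
  (Nat.factorial n) * PowerSeries.coeff n
    ((PowerSeries.mk fun i => (1 : ℝ) / (Nat.factorial (i + 1)))⁻¹ ^ r *
      rescale x (PowerSeries.exp ℝ))

noncomputable def Mser : PowerSeries ℝ := PowerSeries.mk fun i => (1:ℝ)/(Nat.factorial (i+1))

lemma X_mul_M : (X : PowerSeries ℝ) * Mser = PowerSeries.exp ℝ - 1 := by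
  ext n
  cases n with
  | zero =>
    simp [Mser, coeff_exp]
  | succ n =>
    rw [coeff_succ_X_mul, map_sub, coeff_exp, coeff_one]
    simp [Mser, eq_ratCast]

lemma derivExpSelf : d⁄dX ℝ (PowerSeries.exp ℝ) = PowerSeries.exp ℝ := by
  ext n
  rw [coeff_derivative, coeff_exp, coeff_exp, eq_ratCast, eq_ratCast, Nat.factorial_succ]
  push_cast
  have : ((n:ℝ)+1) ≠ 0 := by positivity
  field_simp

lemma key : ∀ (n r : ℕ), ((n.factorial : ℝ)) * PowerSeries.coeff n ((PowerSeries.exp ℝ - 1)^r) = (r.factorial : ℝ) * S2 n r := by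
  intro n
  induction n with
  | zero =>
    intro r
    cases r with
    | zero => simp [S2]
    | succ r =>
      simp only [coeff_zero_eq_constantCoeff, map_pow, map_sub, constantCoeff_exp, map_one,
        sub_self, zero_pow (Nat.succ_ne_zero r), S2]
      simp [S2]
  | succ n ih =>
    intro r
    cases r with
    | zero => simp [S2, coeff_one]
    | succ r =>
      have hd : d⁄dX ℝ ((PowerSeries.exp ℝ - 1)^(r+1)) =
          PowerSeries.C ((r:ℝ)+1) * ((PowerSeries.exp ℝ - 1)^(r+1) + (PowerSeries.exp ℝ - 1)^r) := by
        rw [Derivation.leibniz_pow]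
        rw [Derivation.map_sub, derivExpSelf, Derivation.map_one_eq_zero, sub_zero]
        rw [smul_eq_mul, nsmul_eq_mul, Nat.add_sub_cancel, ← map_natCast (PowerSeries.C (R := ℝ)) (r+1)]
        push_cast
        ring
      have hc := congrArg (PowerSeries.coeff n) hd
      rw [coeff_derivative, coeff_C_mul, map_add] at hc
      have h1 := ih (r+1)
      have h2 := ih r
      have : ((n+1).factorial : ℝ) * PowerSeries.coeff (n+1) ((PowerSeries.exp ℝ - 1)^(r+1))
          = (n.factorial : ℝ) * (PowerSeries.coeff (n+1) ((PowerSeries.exp ℝ - 1)^(r+1)) * (n+1)) := by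
        rw [Nat.factorial_succ]; push_cast; ring
      rw [this, hc]
      have hS : (S2 (n+1) (r+1) : ℝ) = (r+1) * S2 n (r+1) + S2 n r := by
        rw [show S2 (n+1) (r+1) = (r+1) * S2 n (r+1) + S2 n r from rfl]; push_cast; ring
      rw [Nat.factorial_succ (r)]
      rw [Nat.factorial_succ (r)] at h1
      push_cast
      push_cast at h1 h2
      rw [hS]
      linear_combination ((r:ℝ)+1) * h1 + ((r:ℝ)+1) * h2

lemma coeff_M_pow (r l : ℕ) : PowerSeries.coeff l (Mser ^ r) =
    (r.factorial : ℝ) * S2 (l+r) r / ((l+r).factorial : ℝ) := by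
  have h : (X:PowerSeries ℝ)^r * Mser^r = (PowerSeries.exp ℝ - 1)^r := by
    rw [← mul_pow, X_mul_M]
  have h2 : PowerSeries.coeff (l + r) ((X:PowerSeries ℝ)^r * Mser^r) = PowerSeries.coeff l (Mser^r) :=
    coeff_X_pow_mul (Mser^r) r l
  have hk := key (l+r) r
  rw [← h, h2] at hk
  have hf : ((l+r).factorial : ℝ) ≠ 0 := Nat.cast_ne_zero.2 (Nat.factorial_ne_zero _)
  field_simp
  linarith [hk]

lemma constM : PowerSeries.constantCoeff Mser = 1 := by
  rw [← PowerSeries.coeff_zero_eq_constantCoeff]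
  simp [Mser]

lemma M_mul_inv_pow (r : ℕ) : Mser ^ r * (Mser⁻¹) ^ r = 1 := by
  rw [← mul_pow, PowerSeries.mul_inv_cancel _ (by rw [constM]; norm_num), one_pow]

lemma nat_id (j l r : ℕ) (hl : l ≤ j) :
    j.choose l * (j-l).factorial * (l+r).factorial
      = j.factorial * r.factorial * ((l+r).choose r) := by
  have h1 := Nat.choose_mul_factorial_mul_factorial hl
  have h2 : (l+r).choose r * r.factorial * l.factorial = (l+r).factorial := by
    simpa using Nat.choose_mul_factorial_mul_factorial (Nat.le_add_left r l)
  rw [← h2, ← h1]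
  ring

lemma innerSumM (F : PowerSeries ℝ) (r j : ℕ) :
    ∑ l ∈ range (j+1), ((j.choose l : ℝ) / (((l+r).choose r : ℝ))) * (S2 (l+r) r : ℝ) *
      (((j-l).factorial : ℝ) * PowerSeries.coeff (j-l) F)
    = (j.factorial : ℝ) * PowerSeries.coeff j (Mser ^ r * F) := by
  rw [PowerSeries.coeff_mul, Finset.Nat.sum_antidiagonal_eq_sum_range_succ_mk, mul_sum]
  refine sum_congr rfl ?_
  intro l hl
  have hl' : l ≤ j := Nat.lt_succ_iff.mp (mem_range.mp hl)
  rw [coeff_M_pow]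
  have hC : (((l+r).choose r : ℕ):ℝ) ≠ 0 :=
    Nat.cast_ne_zero.2 (Nat.choose_pos (Nat.le_add_left r l)).ne'
  have hFne : (((l+r).factorial : ℕ):ℝ) ≠ 0 := Nat.cast_ne_zero.2 (Nat.factorial_ne_zero _)
  have hid : ((j.choose l : ℕ):ℝ) * ((j-l).factorial) * ((l+r).factorial)
      = (j.factorial) * (r.factorial) * (((l+r).choose r : ℕ)) := by
    exact_mod_cast nat_id j l r hl'
  field_simp
  linear_combination ((S2 (l+r) r : ℝ) * PowerSeries.coeff (j-l) F) * hid

theorem HB_eq_sum_bernoulli_order (ν : ℝ) (hν : ν ≠ 0) (k : ℤ) (n r : ℕ) (x : ℝ) :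
    HB ν k n x = ∑ m ∈ Finset.range (n + 1),
      ((n.choose m : ℝ) * ∑ l ∈ Finset.range (n - m + 1),
        (((n - m).choose l : ℝ) / ((l + r).choose r : ℝ)) * (S2 (l + r) r : ℝ) *
          HB ν k (n - m - l) 0) * bernPoly r m x := by
  classical
  have hone : rescale (0:ℝ) (PowerSeries.exp ℝ) = 1 := by
    rw [rescale_zero]
    simp
  have hHB0 : ∀ d : ℕ, HB ν k d 0
      = (d.factorial : ℝ) * PowerSeries.coeff d (hermGF ν * pbGF k) := by
    intro d
    rw [HB, hone, mul_one]
  set F := hermGF ν * pbGF k with hF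
  set E := rescale x (PowerSeries.exp ℝ) with hE
  have hMser : (PowerSeries.mk fun i => (1 : ℝ) / (Nat.factorial (i + 1))) = Mser := rfl
  have hrw : ∀ m ∈ Finset.range (n+1),
      ((n.choose m : ℝ) * ∑ l ∈ Finset.range (n - m + 1),
        (((n - m).choose l : ℝ) / ((l + r).choose r : ℝ)) * (S2 (l + r) r : ℝ) *
          HB ν k (n - m - l) 0) * bernPoly r m x
      = (n.factorial : ℝ) * (PowerSeries.coeff m ((Mser⁻¹)^r * E)
          * PowerSeries.coeff (n-m) (Mser^r * F)) := by
    intro m hm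
    have hm' : m ≤ n := Nat.lt_succ_iff.mp (Finset.mem_range.mp hm)
    have h1 : (∑ l ∈ Finset.range (n - m + 1),
        (((n - m).choose l : ℝ) / ((l + r).choose r : ℝ)) * (S2 (l + r) r : ℝ) *
          HB ν k (n - m - l) 0)
        = ((n-m).factorial : ℝ) * PowerSeries.coeff (n-m) (Mser ^ r * F) := by
      rw [← innerSumM F r (n-m)]
      refine Finset.sum_congr rfl ?_
      intro l _
      rw [hHB0]
    rw [h1, bernPoly, hMser]
    have h2 : (n.choose m : ℝ) * ((n-m).factorial : ℝ) * (m.factorial : ℝ) = (n.factorial : ℝ) := by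
      exact_mod_cast congrArg (Nat.cast (R := ℝ))
        (by rw [mul_right_comm]; exact Nat.choose_mul_factorial_mul_factorial hm')
    push_cast at h2 ⊢
    linear_combination (PowerSeries.coeff m ((Mser⁻¹)^r * E)
      * PowerSeries.coeff (n-m) (Mser^r * F)) * h2
  rw [Finset.sum_congr rfl hrw, ← Finset.mul_sum]
  have h3 : ∑ m ∈ Finset.range (n+1), PowerSeries.coeff m ((Mser⁻¹)^r * E)
      * PowerSeries.coeff (n-m) (Mser^r * F)
      = PowerSeries.coeff n (((Mser⁻¹)^r * E) * (Mser^r * F)) := by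
    rw [PowerSeries.coeff_mul, Finset.Nat.sum_antidiagonal_eq_sum_range_succ_mk]
  rw [h3]
  have h4 : ((Mser⁻¹)^r * E) * (Mser^r * F) = F * E := by
    have : ((Mser⁻¹)^r * E) * (Mser^r * F) = (Mser^r * (Mser⁻¹)^r) * (F * E) := by ring
    rw [this, M_mul_inv_pow, one_mul]
  rw [h4, HB, hF, hE]
end
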